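/- The formal power series B2(x) = (1 + 3x + 4x^2 - sqrt(1 - 2x - 7x^2))/(4 + 8x) satisfies the functional equation B2 = x + B2*(B2 - x) + (B2 - x)^2 + x*(B2 + (B2 - x))^2; equivalently, the unique power series B with B(0)=0 and constant-term conditions satisfying B = x + B(B-x) + (B-x)^2 + x(2B-x)^2 has (4+8x)B = 1 + 3x + 4x^2 - sqrt(1-2x-7x^2) as formal power series. -/

import Mathlib

open PowerSeries

theorem B2_functional_equation (S B : PowerSeries ℚ)
    (hS0 : PowerSeries.constantCoeff S = 1)
    (hS : S ^ 2 = 1 - 2 * X - 7 * X ^ 2)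
    (hB : (4 + 8 * X) * B = 1 + 3 * X + 4 * X ^ 2 - S) :
    B = X + B * (B - X) + (B - X) * (B - X) + X * (B + (B - X)) ^ 2 := by
  have hS' : S = 1 + 3 * X + 4 * X ^ 2 - (4 + 8 * X) * B := by linear_combination hB
  have h2 : (1 + 3 * X + 4 * X ^ 2 - (4 + 8 * X) * B) ^ 2 = 1 - 2 * X - 7 * X ^ 2 := by
    rw [← hS']; exact hS
  have hne : ((4 + 8 * X : PowerSeries ℚ)) ≠ 0 := by
    intro h
    have := congrArg (constantCoeff : PowerSeries ℚ →+* ℚ) h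
    simp [map_ofNat] at this
  have key : (4 + 8 * X) ^ 2 * B =
      (4 + 8 * X) ^ 2 * (X + B * (B - X) + (B - X) * (B - X) + X * (B + (B - X)) ^ 2) := by
    linear_combination (-(2 + 4 * X)) * h2
  exact mul_left_cancel₀ (pow_ne_zero 2 hne) key
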